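/- arXiv:2302.07694 — 2 statements merged into one kernel-verified Lean document; each statement's English description precedes it below -/
import Mathlib

section
/- Let λ be a partition of m and n ≥ 1. Then, as polynomials in x_1,…,x_n, the Schur polynomial s_λ(x_1,…,x_n) = Σ_{T ∈ SSYT(λ)_n} x_1^{γ_1}⋯x_n^{γ_n} (where (γ_1,…,γ_n) = wt(T)) equals Σ_{T₀ ∈ SYT(λ)} F_{DesComp(T₀)}(x_1,…,x_n), the sum of fundamental quasisymmetric polynomials over all standard Young tableaux of shape λ. -/
open scoped Classical

namespace QC

/-- A filling assigns a natural-number entry to each cell `(i, j)`;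
entries are `0` outside the shape. Values are 1-based. -/
abbrev Filling : Type := ℕ → ℕ → ℕ

/-- The cell `(i, j)` (row `i`, column `j`, both 0-based) lies in the Young diagram of `lam`. -/
def InShape (lam : List ℕ) (i j : ℕ) : Prop :=
  i < lam.length ∧ j < lam.getD i 0

/-- The finite set of cells of the Young diagram of `lam`. -/
def cells (lam : List ℕ) : Finset (ℕ × ℕ) :=
  (Finset.range lam.length).biUnion fun i =>
    ({i} : Finset ℕ) ×ˢ Finset.range (lam.getD i 0)

/-- `lam` is a partition of `m`: weakly decreasing, positive parts, summing to `m`. -/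
def IsPartitionOf (m : ℕ) (lam : List ℕ) : Prop :=
  lam.Pairwise (· ≥ ·) ∧ (∀ x ∈ lam, 0 < x) ∧ lam.sum = m

/-- `a` is a composition of `m`: positive parts summing to `m`. -/
def IsCompositionOf (m : ℕ) (a : List ℕ) : Prop :=
  (∀ x ∈ a, 0 < x) ∧ a.sum = m

/-- `T` is a semistandard Young tableau of shape `lam`: positive entries on the shape,
zero off the shape, rows weakly increasing, columns strictly increasing. -/
def IsSSYT (lam : List ℕ) (T : Filling) : Prop :=
  (∀ i j, ¬ InShape lam i j → T i j = 0) ∧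
  (∀ i j, InShape lam i j → 0 < T i j) ∧
  (∀ i j1 j2, j1 ≤ j2 → InShape lam i j2 → T i j1 ≤ T i j2) ∧
  (∀ i1 i2 j, i1 < i2 → InShape lam i2 j → T i1 j < T i2 j)

/-- All entries of `T` are at most `n`. -/
def EntriesLE (n : ℕ) (T : Filling) : Prop := ∀ i j, T i j ≤ n

/-- `T` is a standard Young tableau of shape `lam ⊢ m`: a semistandard tableau in which
each of `1, …, m` appears exactly once. -/
def IsSYT (lam : List ℕ) (m : ℕ) (T : Filling) : Prop :=
  IsSSYT lam T ∧ EntriesLE m T ∧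
    ∀ k, 1 ≤ k → k ≤ m → ∃! c : ℕ × ℕ, InShape lam c.1 c.2 ∧ T c.1 c.2 = k

/-- `k` is a descent of the standard tableau `T`: `k + 1` lies in a strictly lower row. -/
def IsDescent (lam : List ℕ) (T : Filling) (k : ℕ) : Prop :=
  ∃ i1 j1 i2 j2, InShape lam i1 j1 ∧ InShape lam i2 j2 ∧
    T i1 j1 = k ∧ T i2 j2 = k + 1 ∧ i1 < i2

/-- The sorted list of descents of `T`, a standard tableau with `m` cells. -/
noncomputable def descentList (lam : List ℕ) (m : ℕ) (T : Filling) : List ℕ :=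
  ((Finset.Ico 1 m).filter fun k => IsDescent lam T k).sort (· ≤ ·)

/-- The number of descents of `T`. -/
noncomputable def numDescents (lam : List ℕ) (m : ℕ) (T : Filling) : ℕ :=
  ((Finset.Ico 1 m).filter fun k => IsDescent lam T k).card

/-- The descent composition `(d₁, d₂ - d₁, …, m - d_{s-1})` of a standard tableau. -/
noncomputable def desComp (lam : List ℕ) (m : ℕ) (T : Filling) : List ℕ :=
  if m = 0 then [] else
    List.zipWith (· - ·) (descentList lam m T ++ [m]) (0 :: descentList lam m T)

/-- The number of cells of `T` carrying the entry `v`. -/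
def countEq (lam : List ℕ) (T : Filling) (v : ℕ) : ℕ :=
  ((cells lam).filter fun c => T c.1 c.2 = v).card

/-- The weight of `T` as a list `(γ₁, …, γₙ)`, `γᵢ` the number of entries equal to `i`. -/
def wt (lam : List ℕ) (n : ℕ) (T : Filling) : List ℕ :=
  (List.range n).map fun v => countEq lam T (v + 1)

/-- The standardization of `T`: cells are relabelled `1, …, m` in order of increasing entry,
breaking ties between equal entries by increasing column index. -/
noncomputable def stdize (lam : List ℕ) (T : Filling) : Filling := fun i j =>
  if InShape lam i j then
    ((cells lam).filter fun c =>
      T c.1 c.2 < T i j ∨ (T c.1 c.2 = T i j ∧ c.2 ≤ j)).card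
  else 0

/-- Given a weak composition `g`, `destValue g k` is the unique `i` with
`g₁ + ⋯ + g_{i-1} < k ≤ g₁ + ⋯ + g_i` (and `0` for `k = 0`). -/
def destValue (g : List ℕ) (k : ℕ) : ℕ :=
  ((List.range g.length).filter fun i => (g.take i).sum < k).length

/-- The destandardization `D_g(T₀)`: each entry `j` of `T₀` is replaced by the unique `i`
with `g₁ + ⋯ + g_{i-1} < j ≤ g₁ + ⋯ + g_i`. -/
def Dmap (g : List ℕ) (T : Filling) : Filling := fun i j => destValue g (T i j)

/-- `Refines a b`: the composition `b` refines `a`, i.e. `b` can be cut into consecutive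
blocks whose sums are the parts of `a` in order. -/
def Refines (a b : List ℕ) : Prop :=
  ∃ L : List (List ℕ), L.flatten = b ∧ L.map List.sum = a

/-- Strict lexicographic order on integer sequences. -/
def lexLt (a b : List ℕ) : Prop := List.Lex (· < ·) a b

/-- Weak lexicographic order on integer sequences. -/
def lexLe (a b : List ℕ) : Prop := a = b ∨ lexLt a b

/-- The largest entry of `T`. -/
def maxEntry (lam : List ℕ) (T : Filling) : ℕ :=
  (cells lam).sup fun c => T c.1 c.2

/-- The weight of `T` (over all values), with zero parts deleted. -/
def wtFull (lam : List ℕ) (T : Filling) : List ℕ :=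
  ((List.range (maxEntry lam T)).map fun v => countEq lam T (v + 1)).filter (· ≠ 0)

/-- The proper partial sums `α₁, α₁ + α₂, …, α₁ + ⋯ + α_{s-1}` of a composition. -/
def innerSums (a : List ℕ) : List ℕ :=
  (List.range a.length).tail.map fun t => (a.take t).sum

/-- `f : Fin m → Fin n` encodes a sequence `1 ≤ i₁ ≤ i₂ ≤ … ≤ i_m ≤ n` (via `i_t = f (t-1) + 1`)
which ascends strictly, `i_j < i_{j+1}`, at every proper partial sum `j` of `a`. -/
def IsFWord (m n : ℕ) (a : List ℕ) (f : Fin m → Fin n) : Prop :=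
  Monotone f ∧
    ∀ (t : ℕ) (ht : t + 1 < m), (t + 1) ∈ innerSums a →
      f ⟨t, Nat.lt_of_succ_lt ht⟩ < f ⟨t + 1, ht⟩

/-- The fundamental quasisymmetric polynomial `F_a(x₁, …, xₙ)` of degree `m`. -/
noncomputable def Fpoly (m n : ℕ) (a : List ℕ) : MvPolynomial (Fin n) ℤ :=
  ∑ f ∈ Finset.univ.filter (fun f : Fin m → Fin n => IsFWord m n a f),
    ∏ t : Fin m, MvPolynomial.X (f t)

/-- The monomial `x₁^{γ₁} ⋯ xₙ^{γₙ}` of a tableau `T` of weight `γ`. -/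
noncomputable def wtMonomial (lam : List ℕ) (n : ℕ) (T : Filling) :
    MvPolynomial (Fin n) ℤ :=
  ∏ i : Fin n, MvPolynomial.X i ^ countEq lam T (i.val + 1)

/-- `Rot` of a word `w` of length `k` on `{1, …, n}`: the `j`-th letter of `rot k n w`
is `n + 1 - w_{k+1-j}` (1-based), here written 0-based. -/
def rot (k n : ℕ) (w : Fin k → ℕ) : Fin k → ℕ := fun j =>
  n + 1 - w ⟨k - 1 - j.val, by have := j.isLt; omega⟩

/-- The descent set of a word `w = w₁ ⋯ w_k`: positions `i ∈ {1, …, k-1}` with `wᵢ > w_{i+1}`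
(1-based positions; `w ⟨i-1,_⟩` is `wᵢ`). -/
noncomputable def wordDes (k : ℕ) (w : Fin k → ℕ) : Finset ℕ :=
  (Finset.Ico 1 k).filter fun i =>
    ∃ (h1 : i - 1 < k) (h2 : i < k), w ⟨i, h2⟩ < w ⟨i - 1, h1⟩

/-- The descent composition of a word of length `k`. -/
noncomputable def wordDesComp (k : ℕ) (w : Fin k → ℕ) : List ℕ :=
  if k = 0 then []
  else
    List.zipWith (· - ·) ((wordDes k w).sort (· ≤ ·) ++ [k])
      (0 :: (wordDes k w).sort (· ≤ ·))

lemma mem_cells {lam : List ℕ} {c : ℕ × ℕ} : c ∈ cells lam ↔ InShape lam c.1 c.2 := by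
  obtain ⟨i, j⟩ := c
  simp only [cells, Finset.mem_biUnion, Finset.mem_range, Finset.mem_product,
    Finset.mem_singleton, InShape]
  constructor
  · rintro ⟨k, hk, rfl, h⟩; exact ⟨hk, h⟩
  · rintro ⟨h1, h2⟩; exact ⟨i, h1, rfl, h2⟩

lemma sum_range_getD : ∀ l : List ℕ, ∑ i ∈ Finset.range l.length, l.getD i 0 = l.sum := by
  intro l
  induction l with
  | nil => simp
  | cons a l ih =>
      rw [List.length_cons, Finset.sum_range_succ']
      simp only [List.getD_cons_succ, List.getD_cons_zero, List.sum_cons]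
      rw [ih]; omega

lemma card_cells (lam : List ℕ) : (cells lam).card = lam.sum := by
  rw [cells, Finset.card_biUnion]
  · have h : ∀ i, (({i} : Finset ℕ) ×ˢ Finset.range (lam.getD i 0)).card = lam.getD i 0 := by
      intro i; simp
    simp only [h]
    exact sum_range_getD lam
  · intro x hx y hy hxy
    simp only [Finset.disjoint_left, Finset.mem_product, Finset.mem_singleton]
    rintro ⟨a, b⟩ ⟨rfl, -⟩ ⟨h, -⟩
    exact hxy h

lemma shape_mono {lam : List ℕ} (hs : lam.Pairwise (· ≥ ·)) {i j i' j' : ℕ}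
    (h : InShape lam i j) (hi : i' ≤ i) (hj : j' ≤ j) : InShape lam i' j' := by
  obtain ⟨h1, h2⟩ := h
  have h1' : i' < lam.length := lt_of_le_of_lt hi h1
  refine ⟨h1', lt_of_le_of_lt hj (lt_of_lt_of_le h2 ?_)⟩
  rw [List.getD_eq_getElem lam 0 h1, List.getD_eq_getElem lam 0 h1']
  rcases eq_or_lt_of_le hi with rfl | hlt
  · exact le_rfl
  · exact List.pairwise_iff_getElem.mp hs i' i h1' h1 hlt

lemma part_le_sum {lam : List ℕ} {i : ℕ} (h : i < lam.length) : lam.getD i 0 ≤ lam.sum := by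
  rw [List.getD_eq_getElem lam 0 h]
  exact List.le_sum_of_mem (List.getElem_mem h)

lemma col_lt_m {m : ℕ} {lam : List ℕ} (hlam : IsPartitionOf m lam) {i j : ℕ}
    (h : InShape lam i j) : j < m := by
  obtain ⟨-, -, h3⟩ := hlam
  obtain ⟨h1, h2⟩ := h
  have := part_le_sum h1
  omega


/-- weak NW comparison in an SSYT -/
lemma nw_le {lam : List ℕ} {T : Filling} (hs : lam.Pairwise (· ≥ ·)) (hT : IsSSYT lam T)
    {i' j' i j : ℕ} (hsh : InShape lam i j) (hi : i' ≤ i) (hj : j' ≤ j) :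
    T i' j' ≤ T i j := by
  have hsh' : InShape lam i' j := shape_mono hs hsh hi le_rfl
  have h1 : T i' j' ≤ T i' j := hT.2.2.1 i' j' j hj hsh'
  rcases eq_or_lt_of_le hi with rfl | hlt
  · exact h1
  · exact le_of_lt (lt_of_le_of_lt h1 (hT.2.2.2 i' i j hlt hsh))

/-- strict NW comparison when rows differ -/
lemma nw_lt {lam : List ℕ} {T : Filling} (hs : lam.Pairwise (· ≥ ·)) (hT : IsSSYT lam T)
    {i' j' i j : ℕ} (hsh : InShape lam i j) (hi : i' < i) (hj : j' ≤ j) :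
    T i' j' < T i j := by
  have hsh' : InShape lam i' j := shape_mono hs hsh (le_of_lt hi) le_rfl
  exact lt_of_le_of_lt (hT.2.2.1 i' j' j hj hsh') (hT.2.2.2 i' i j hi hsh)

/-- equal values in an SSYT with strictly increasing rows force strictly decreasing columns -/
lemma eq_val_col {lam : List ℕ} {T : Filling} (hs : lam.Pairwise (· ≥ ·)) (hT : IsSSYT lam T)
    {i1 j1 i2 j2 : ℕ} (h1 : InShape lam i1 j1) (h2 : InShape lam i2 j2)
    (hij : i1 < i2) (hv : T i1 j1 = T i2 j2) : j2 < j1 := by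
  by_contra hcon
  push_neg at hcon
  have := nw_lt hs hT h2 hij hcon
  omega

/-- key for the standardization order: compare (value, column) lexicographically,
packed into a single natural number. -/
def keyv (m : ℕ) (T : Filling) (c : ℕ × ℕ) : ℕ := c.2 + T c.1 c.2 * (m + 1)

lemma pack_lt_pack {m a b x y : ℕ} (hx : x ≤ m) (hy : y ≤ m) :
    x + a * (m + 1) < y + b * (m + 1) ↔ a < b ∨ (a = b ∧ x < y) := by
  constructor
  · intro h
    rcases lt_trichotomy a b with hab | rfl | hab
    · exact Or.inl hab
    · right; exact ⟨rfl, by omega⟩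
    · exfalso
      have h2 : (b + 1) * (m + 1) ≤ a * (m + 1) := Nat.mul_le_mul_right _ hab
      have h3 : (b + 1) * (m + 1) = b * (m + 1) + (m + 1) := by ring
      omega
  · rintro (hab | ⟨rfl, hxy⟩)
    · have h2 : (a + 1) * (m + 1) ≤ b * (m + 1) := Nat.mul_le_mul_right _ hab
      have h3 : (a + 1) * (m + 1) = a * (m + 1) + (m + 1) := by ring
      omega
    · omega

lemma keyv_lt_iff {m : ℕ} {lam : List ℕ} (hlam : IsPartitionOf m lam) {T : Filling}
    {c c' : ℕ × ℕ} (hc : InShape lam c.1 c.2) (hc' : InShape lam c'.1 c'.2) :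
    keyv m T c < keyv m T c' ↔
      T c.1 c.2 < T c'.1 c'.2 ∨ (T c.1 c.2 = T c'.1 c'.2 ∧ c.2 < c'.2) := by
  exact pack_lt_pack (le_of_lt (col_lt_m hlam hc)) (le_of_lt (col_lt_m hlam hc'))

lemma keyv_inj {m : ℕ} {lam : List ℕ} (hlam : IsPartitionOf m lam) {T : Filling}
    (hT : IsSSYT lam T) {c c' : ℕ × ℕ} (hc : InShape lam c.1 c.2) (hc' : InShape lam c'.1 c'.2)
    (h : keyv m T c = keyv m T c') : c = c' := by
  obtain ⟨i, j⟩ := c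
  obtain ⟨i', j'⟩ := c'
  simp only at hc hc' ⊢
  have h1 : j < m + 1 := by have := col_lt_m hlam hc; omega
  have h2 : j' < m + 1 := by have := col_lt_m hlam hc'; omega
  have hcol : j = j' := by
    have := congrArg (· % (m + 1)) h
    simpa [keyv, Nat.add_mul_mod_self_right, Nat.mod_eq_of_lt h1, Nat.mod_eq_of_lt h2] using this
  subst hcol
  have hval : T i j = T i' j := by
    have h3 : T i j * (m+1) = T i' j * (m+1) := by
      simp only [keyv] at h; omega
    exact Nat.eq_of_mul_eq_mul_right (by omega) h3
  have hrow : i = i' := by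
    rcases lt_trichotomy i i' with hr | hr | hr
    · have := hT.2.2.2 i i' j hr hc'; omega
    · exact hr
    · have := hT.2.2.2 i' i j hr hc; omega
  rw [hrow]

/-- the rank of a cell in the standardization order -/
noncomputable def rank (lam : List ℕ) (m : ℕ) (T : Filling) (c : ℕ × ℕ) : ℕ :=
  ((cells lam).filter fun c' => keyv m T c' ≤ keyv m T c).card

/-- the standardization of `T` -/
noncomputable def std (lam : List ℕ) (m : ℕ) (T : Filling) : Filling := fun i j =>
  if InShape lam i j then rank lam m T (i, j) else 0

lemma rank_pos {lam : List ℕ} {m : ℕ} {T : Filling} {c : ℕ × ℕ}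
    (hc : c ∈ cells lam) : 0 < rank lam m T c := by
  refine Finset.card_pos.mpr ⟨c, Finset.mem_filter.mpr ⟨hc, le_rfl⟩⟩

lemma rank_le {lam : List ℕ} {m : ℕ} {T : Filling} (hlam : IsPartitionOf m lam) (c : ℕ × ℕ) :
    rank lam m T c ≤ m := by
  calc rank lam m T c ≤ (cells lam).card := Finset.card_filter_le _ _
  _ = m := by rw [card_cells, hlam.2.2]

lemma rank_lt_rank {lam : List ℕ} {m : ℕ} {T : Filling} {c c' : ℕ × ℕ}
    (hc' : c' ∈ cells lam) (h : keyv m T c < keyv m T c') :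
    rank lam m T c < rank lam m T c' := by
  apply Finset.card_lt_card
  constructor
  · intro x hx
    simp only [Finset.mem_filter] at hx ⊢
    exact ⟨hx.1, le_of_lt (lt_of_le_of_lt hx.2 h)⟩
  · intro hsub
    have := hsub (Finset.mem_filter.mpr ⟨hc', le_rfl⟩)
    simp only [Finset.mem_filter] at this
    omega

lemma rank_le_rank {lam : List ℕ} {m : ℕ} {T : Filling} {c c' : ℕ × ℕ}
    (h : keyv m T c ≤ keyv m T c') :
    rank lam m T c ≤ rank lam m T c' := by
  apply Finset.card_le_card
  intro x hx
  simp only [Finset.mem_filter] at hx ⊢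
  exact ⟨hx.1, le_trans hx.2 h⟩

/-- rank is a surjection from cells onto [1, m] -/
lemma rank_surj {lam : List ℕ} {m : ℕ} {T : Filling} (hlam : IsPartitionOf m lam)
    (hT : IsSSYT lam T) {k : ℕ} (h1 : 1 ≤ k) (h2 : k ≤ m) :
    ∃ c ∈ cells lam, rank lam m T c = k := by
  have hinj : Set.InjOn (rank lam m T) (cells lam) := by
    intro c hc c' hc' h
    rcases lt_trichotomy (keyv m T c) (keyv m T c') with hk | hk | hk
    · have := rank_lt_rank hc' hk; omega
    · exact keyv_inj hlam hT (mem_cells.mp hc) (mem_cells.mp hc') hk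
    · have := rank_lt_rank hc hk; omega
  have himage : (cells lam).image (rank lam m T) = Finset.Icc 1 m := by
    apply Finset.eq_of_subset_of_card_le
    · intro x hx
      obtain ⟨c, hc, rfl⟩ := Finset.mem_image.mp hx
      exact Finset.mem_Icc.mpr ⟨rank_pos hc, rank_le hlam c⟩
    · rw [Finset.card_image_of_injOn hinj, card_cells, hlam.2.2, Nat.card_Icc]
      omega
  have : k ∈ (cells lam).image (rank lam m T) := by
    rw [himage]; exact Finset.mem_Icc.mpr ⟨h1, h2⟩
  obtain ⟨c, hc, hr⟩ := Finset.mem_image.mp this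
  exact ⟨c, hc, hr⟩

lemma std_isSYT {lam : List ℕ} {m : ℕ} {T : Filling} (hlam : IsPartitionOf m lam)
    (hT : IsSSYT lam T) : IsSYT lam m (std lam m T) := by
  have hs := hlam.1
  refine ⟨⟨?_, ?_, ?_, ?_⟩, ?_, ?_⟩
  · intro i j h; simp [std, h]
  · intro i j h; simp only [std, if_pos h]; exact rank_pos (mem_cells.mpr h)
  · intro i j1 j2 hj h2
    have h1 : InShape lam i j1 := shape_mono hs h2 le_rfl hj
    simp only [std, if_pos h1, if_pos h2]
    apply rank_le_rank
    have hvle : T i j1 ≤ T i j2 := hT.2.2.1 i j1 j2 hj h2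
    rcases eq_or_lt_of_le hvle with he | hlt
    · rcases eq_or_lt_of_le hj with rfl | hjlt
      · exact le_rfl
      · exact le_of_lt ((keyv_lt_iff hlam h1 h2).mpr (Or.inr ⟨he, hjlt⟩))
    · exact le_of_lt ((keyv_lt_iff hlam h1 h2).mpr (Or.inl hlt))
  · intro i1 i2 j hi h2
    have h1 : InShape lam i1 j := shape_mono hs h2 (le_of_lt hi) le_rfl
    simp only [std, if_pos h1, if_pos h2]
    exact rank_lt_rank (mem_cells.mpr h2)
      ((keyv_lt_iff hlam h1 h2).mpr (Or.inl (hT.2.2.2 i1 i2 j hi h2)))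
  · intro i j
    by_cases h : InShape lam i j
    · simp only [std, if_pos h]; exact rank_le hlam _
    · simp [std, h]
  · intro k hk1 hk2
    obtain ⟨c, hc, hr⟩ := rank_surj hlam hT hk1 hk2
    refine ⟨c, ⟨mem_cells.mp hc, by simp only [std, if_pos (mem_cells.mp hc)]; exact hr⟩, ?_⟩
    rintro c' ⟨hc', hr'⟩
    simp only [std, if_pos hc'] at hr'
    -- rank injective
    have hc'' := mem_cells.mpr hc'
    rcases lt_trichotomy (keyv m T (c'.1, c'.2)) (keyv m T c) with hk | hk | hk
    · have := rank_lt_rank hc hk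
      rw [hr, hr'] at this; omega
    · have := keyv_inj hlam hT (c := (c'.1, c'.2)) (c' := c) hc' (mem_cells.mp hc) hk
      simpa using this
    · have := rank_lt_rank (mem_cells.mpr (by exact hc' : InShape lam (c'.1, c'.2).1 (c'.1, c'.2).2)) hk
      rw [hr, hr'] at this; omega

/-- the unique cell of a filling carrying value `k` (junk if none exists) -/
noncomputable def cellOf (lam : List ℕ) (T : Filling) (k : ℕ) : ℕ × ℕ :=
  if h : ∃ c : ℕ × ℕ, InShape lam c.1 c.2 ∧ T c.1 c.2 = k then h.choose else (0, 0)

lemma cellOf_spec {lam : List ℕ} {m : ℕ} {T : Filling} (hT : IsSYT lam m T) {k : ℕ}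
    (h1 : 1 ≤ k) (h2 : k ≤ m) :
    InShape lam (cellOf lam T k).1 (cellOf lam T k).2 ∧ T (cellOf lam T k).1 (cellOf lam T k).2 = k := by
  obtain ⟨c, hc, -⟩ := hT.2.2 k h1 h2
  rw [cellOf, dif_pos ⟨c, hc⟩]
  exact (⟨c, hc⟩ : ∃ c : ℕ × ℕ, InShape lam c.1 c.2 ∧ T c.1 c.2 = k).choose_spec

lemma cellOf_unique {lam : List ℕ} {m : ℕ} {T : Filling} (hT : IsSYT lam m T) {k : ℕ}
    (h1 : 1 ≤ k) (h2 : k ≤ m) {c : ℕ × ℕ} (hc : InShape lam c.1 c.2) (hv : T c.1 c.2 = k) :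
    c = cellOf lam T k := by
  obtain ⟨c', hc', hu⟩ := hT.2.2 k h1 h2
  have e1 := hu c ⟨hc, hv⟩
  have e2 := hu _ (cellOf_spec hT h1 h2)
  rw [e1, e2]

/-- an in-shape value of an SYT lies in [1, m] -/
lemma syt_val_mem {lam : List ℕ} {m : ℕ} {T : Filling} (hT : IsSYT lam m T) {i j : ℕ}
    (h : InShape lam i j) : 1 ≤ T i j ∧ T i j ≤ m :=
  ⟨hT.1.2.1 i j h, hT.2.1 i j⟩

/-- value of an SYT equals the number of cells with smaller-or-equal value -/
lemma syt_val_eq_card {lam : List ℕ} {m : ℕ} {T : Filling} (hlam : IsPartitionOf m lam)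
    (hT : IsSYT lam m T) {c : ℕ × ℕ} (hc : c ∈ cells lam) :
    ((cells lam).filter fun c' => T c'.1 c'.2 ≤ T c.1 c.2).card = T c.1 c.2 := by
  have hcs := mem_cells.mp hc
  obtain ⟨hv1, hv2⟩ := syt_val_mem hT hcs
  have : ((cells lam).filter fun c' => T c'.1 c'.2 ≤ T c.1 c.2).card
      = (Finset.Icc 1 (T c.1 c.2)).card := by
    apply Finset.card_bij (fun c' _ => T c'.1 c'.2)
    · intro a ha
      simp only [Finset.mem_filter] at ha
      obtain ⟨hv1', -⟩ := syt_val_mem hT (mem_cells.mp ha.1)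
      exact Finset.mem_Icc.mpr ⟨hv1', ha.2⟩
    · intro a ha b hb hab
      simp only [Finset.mem_filter] at ha hb
      obtain ⟨hva, hva2⟩ := syt_val_mem hT (mem_cells.mp ha.1)
      have e1 := cellOf_unique hT hva (le_trans ha.2 hv2) (mem_cells.mp ha.1) rfl
      have e2 := cellOf_unique hT hva (le_trans ha.2 hv2) (mem_cells.mp hb.1) hab.symm
      rw [e1, e2]
    · intro b hb
      obtain ⟨hb1, hb2⟩ := Finset.mem_Icc.mp hb
      obtain ⟨hsh, hval⟩ := cellOf_spec hT hb1 (le_trans hb2 hv2)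
      refine ⟨cellOf lam T b, Finset.mem_filter.mpr ⟨mem_cells.mpr hsh, by omega⟩, hval⟩
  rw [this, Nat.card_Icc]
  omega

lemma descent_of_rows {lam : List ℕ} {m : ℕ} {T : Filling} (hT : IsSYT lam m T) {k : ℕ}
    (h1 : 1 ≤ k) (h2 : k + 1 ≤ m)
    (hrow : (cellOf lam T k).1 < (cellOf lam T (k + 1)).1) : IsDescent lam T k := by
  obtain ⟨ha, hav⟩ := cellOf_spec hT h1 (by omega)
  obtain ⟨hb, hbv⟩ := cellOf_spec hT (by omega : 1 ≤ k + 1) h2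
  exact ⟨_, _, _, _, ha, hb, hav, hbv, hrow⟩

lemma not_descent_row {lam : List ℕ} {m : ℕ} {T : Filling} (hT : IsSYT lam m T) {k : ℕ}
    (h1 : 1 ≤ k) (h2 : k + 1 ≤ m) (hnd : ¬ IsDescent lam T k) :
    (cellOf lam T (k + 1)).1 ≤ (cellOf lam T k).1 := by
  by_contra h
  exact hnd (descent_of_rows hT h1 h2 (by omega))

/-- if `T` has no descent at `k` then column of `k+1` exceeds column of `k` -/
lemma not_descent_col {lam : List ℕ} {m : ℕ} {T : Filling} (hlam : IsPartitionOf m lam)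
    (hT : IsSYT lam m T) {k : ℕ}
    (h1 : 1 ≤ k) (h2 : k + 1 ≤ m) (hnd : ¬ IsDescent lam T k) :
    (cellOf lam T k).2 < (cellOf lam T (k + 1)).2 := by
  have hrow := not_descent_row hT h1 h2 hnd
  obtain ⟨ha, hav⟩ := cellOf_spec hT h1 (by omega)
  obtain ⟨hb, hbv⟩ := cellOf_spec hT (by omega : 1 ≤ k + 1) h2
  by_contra hcon
  push_neg at hcon
  have := nw_le hlam.1 hT.1 ha hrow hcon
  omega

/-- rows weakly decrease along a descent-free stretch -/
lemma row_chain {lam : List ℕ} {m : ℕ} {T : Filling} (hT : IsSYT lam m T) {a : ℕ}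
    (h1 : 1 ≤ a) : ∀ b, a ≤ b → b ≤ m → (∀ d, a ≤ d → d < b → ¬ IsDescent lam T d) →
    (cellOf lam T b).1 ≤ (cellOf lam T a).1 := by
  intro b
  induction b with
  | zero => intro hab hbm _; omega
  | succ b ih =>
      intro hab hbm hnd
      rcases eq_or_lt_of_le hab with he | hlt
      · rw [← he]
      · have hb : a ≤ b := by omega
        have step := not_descent_row hT (by omega : 1 ≤ b) hbm (hnd b hb (by omega))
        have := ih hb (by omega) (fun d hd1 hd2 => hnd d hd1 (by omega))
        omega

/-- columns strictly increase along a descent-free stretch -/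
lemma col_chain {lam : List ℕ} {m : ℕ} {T : Filling} (hlam : IsPartitionOf m lam)
    (hT : IsSYT lam m T) {a : ℕ}
    (h1 : 1 ≤ a) : ∀ b, a < b → b ≤ m → (∀ d, a ≤ d → d < b → ¬ IsDescent lam T d) →
    (cellOf lam T a).2 < (cellOf lam T b).2 := by
  intro b
  induction b with
  | zero => intro hab hbm _; omega
  | succ b ih =>
      intro hab hbm hnd
      have step := not_descent_col hlam hT (by omega : 1 ≤ b) hbm (hnd b (by omega) (by omega))
      rcases eq_or_lt_of_le (Nat.succ_le_of_lt hab) with he | hlt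
      · have : a = b := by omega
        rw [this]; exact step
      · have := ih (by omega) (by omega) (fun d hd1 hd2 => hnd d hd1 (by omega))
        omega

lemma exists_descent {lam : List ℕ} {m : ℕ} {T : Filling} (hT : IsSYT lam m T) {a b : ℕ}
    (h1 : 1 ≤ a) (hab : a ≤ b) (hbm : b ≤ m)
    (hrow : (cellOf lam T a).1 < (cellOf lam T b).1) :
    ∃ d, a ≤ d ∧ d < b ∧ IsDescent lam T d := by
  by_contra h
  push_neg at h
  have := row_chain hT h1 b hab hbm (fun d hd1 hd2 => h d hd1 hd2)
  omega


lemma zipWith_sub_length (dl : List ℕ) (p m : ℕ) :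
    (List.zipWith (· - ·) (dl ++ [m]) (p :: dl)).length = dl.length + 1 := by
  rw [List.length_zipWith]
  simp

lemma partial_sums (m : ℕ) : ∀ (dl : List ℕ) (p : ℕ), List.Chain (· < ·) p dl →
    (∀ x ∈ dl, x < m) → p ≤ m → ∀ t, t ≤ dl.length →
    p + ((List.zipWith (· - ·) (dl ++ [m]) (p :: dl)).take t).sum = (p :: dl).getD t 0 := by
  intro dl
  induction dl with
  | nil =>
      intro p _ _ hpm t ht
      have : t = 0 := Nat.le_zero.mp ht
      subst this
      simp
  | cons d dl ih =>
      intro p hchain hlt hpm t ht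
      rcases List.chain_cons.mp hchain with ⟨hpd, hchain'⟩
      have hzip : List.zipWith (· - ·) ((d :: dl) ++ [m]) (p :: d :: dl)
          = (d - p) :: List.zipWith (· - ·) (dl ++ [m]) (d :: dl) := by
        simp
      rw [hzip]
      match t with
      | 0 => simp
      | Nat.succ t' =>
          rw [List.take_succ_cons, List.sum_cons]
          have hd : d ≤ m := le_of_lt (hlt d (by simp))
          have := ih d hchain' (fun x hx => hlt x (by simp [hx])) hd t' (by simpa using ht)
          simp only [List.getD_cons_succ]
          omega

lemma innerSums_zip (m : ℕ) (dl : List ℕ) (hchain : List.Chain (· < ·) 0 dl)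
    (hlt : ∀ x ∈ dl, x < m) :
    innerSums (List.zipWith (· - ·) (dl ++ [m]) (0 :: dl)) = dl := by
  set a := List.zipWith (· - ·) (dl ++ [m]) (0 :: dl) with ha
  have hlen : a.length = dl.length + 1 := zipWith_sub_length dl 0 m
  have hps := partial_sums m dl 0 hchain hlt (Nat.zero_le m)
  apply List.ext_getElem
  · simp [innerSums, hlen]
  · intro i hi1 hi2
    have hlen2 : (innerSums a).length = dl.length := by simp [innerSums, hlen]
    rw [hlen2] at hi1
    have hrange : (List.range a.length).tail = List.map Nat.succ (List.range dl.length) := by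
      rw [hlen, List.range_succ_eq_map]
      simp
    have : innerSums a = List.map (fun i => (a.take (i+1)).sum) (List.range dl.length) := by
      rw [innerSums, hrange, List.map_map]
      rfl
    rw [List.getElem_of_eq this]
    simp only [List.getElem_map, List.getElem_range]
    have := hps (i+1) (by omega)
    simp only [Nat.zero_add] at this
    rw [this, List.getD_cons_succ, List.getD_eq_getElem dl 0 hi1]

lemma descentList_chain {lam : List ℕ} {m : ℕ} {T : Filling} :
    List.Chain (· < ·) 0 (descentList lam m T) ∧ ∀ x ∈ descentList lam m T, x < m := by
  constructor
  · rw [List.Chain, List.isChain_iff_pairwise]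
    apply List.Pairwise.cons
    · intro x hx
      have := (Finset.mem_filter.mp ((Finset.mem_sort (α := ℕ) (· ≤ ·)).mp hx)).1
      have := Finset.mem_Ico.mp this
      omega
    · exact (Finset.sortedLT_sort _).pairwise
  · intro x hx
    have := (Finset.mem_filter.mp ((Finset.mem_sort (α := ℕ) (· ≤ ·)).mp hx)).1
    have := Finset.mem_Ico.mp this
    omega

lemma mem_innerSums_desComp {lam : List ℕ} {m : ℕ} {T : Filling} {k : ℕ} :
    k ∈ innerSums (desComp lam m T) ↔ (1 ≤ k ∧ k < m ∧ IsDescent lam T k) := by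
  rcases Nat.eq_zero_or_pos m with rfl | hm
  · simp [desComp, innerSums]
  · rw [desComp, if_neg (by omega),
      innerSums_zip m _ descentList_chain.1 descentList_chain.2]
    rw [descentList]
    rw [Finset.mem_sort (α := ℕ) (· ≤ ·), Finset.mem_filter, Finset.mem_Ico]
    tauto


/-- destandardization of a standard tableau along a word -/
noncomputable def Psi (lam : List ℕ) (m n : ℕ) (T₀ : Filling) (f : Fin m → Fin n) : Filling :=
  fun i j => if h : InShape lam i j ∧ T₀ i j - 1 < m then (f ⟨T₀ i j - 1, h.2⟩).val + 1 else 0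

lemma Psi_off {lam : List ℕ} {m n : ℕ} {T₀ : Filling} {f : Fin m → Fin n} {i j : ℕ}
    (h : ¬ InShape lam i j) : Psi lam m n T₀ f i j = 0 := by
  rw [Psi, dif_neg]; tauto

lemma Psi_on {lam : List ℕ} {m n : ℕ} {T₀ : Filling} (hT₀ : IsSYT lam m T₀)
    {f : Fin m → Fin n} {i j : ℕ} (h : InShape lam i j) :
    ∃ hm : T₀ i j - 1 < m,
      Psi lam m n T₀ f i j = (f ⟨T₀ i j - 1, hm⟩).val + 1 := by
  obtain ⟨h1, h2⟩ := syt_val_mem hT₀ h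
  have hm : T₀ i j - 1 < m := by omega
  exact ⟨hm, by rw [Psi, dif_pos ⟨h, hm⟩]⟩

lemma fword_le {m n : ℕ} {a : List ℕ} {f : Fin m → Fin n} (hf : IsFWord m n a f)
    {s t : ℕ} (hs : s < m) (ht : t < m) (hst : s ≤ t) :
    f ⟨s, hs⟩ ≤ f ⟨t, ht⟩ :=
  hf.1 (by simp only [Fin.mk_le_mk]; omega)

/-- at a descent of `T₀`, an f-word for the descent composition increases strictly -/
lemma fword_strict {lam : List ℕ} {m n : ℕ} {T₀ : Filling} {f : Fin m → Fin n}
    (hf : IsFWord m n (desComp lam m T₀) f) {d : ℕ} (h1 : 1 ≤ d) (h2 : d < m)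
    (hd : IsDescent lam T₀ d) :
    ∃ (p1 : d - 1 < m) (p2 : d < m), f ⟨d - 1, p1⟩ < f ⟨d, p2⟩ := by
  have ht : (d - 1) + 1 < m := by omega
  have hmem : (d - 1) + 1 ∈ innerSums (desComp lam m T₀) := by
    rw [mem_innerSums_desComp]
    refine ⟨by omega, by omega, ?_⟩
    rw [show d - 1 + 1 = d from by omega]
    exact hd
  have := hf.2 (d - 1) ht hmem
  refine ⟨by omega, h2, ?_⟩
  have he : (⟨(d - 1) + 1, ht⟩ : Fin m) = ⟨d, h2⟩ := Fin.ext (by simp; omega)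
  rwa [he] at this

lemma Psi_isSSYT {lam : List ℕ} {m n : ℕ} (hlam : IsPartitionOf m lam) {T₀ : Filling}
    (hT₀ : IsSYT lam m T₀) {f : Fin m → Fin n}
    (hf : IsFWord m n (desComp lam m T₀) f) :
    IsSSYT lam (Psi lam m n T₀ f) := by
  have hs := hlam.1
  refine ⟨fun i j h => Psi_off h, ?_, ?_, ?_⟩
  · intro i j h
    obtain ⟨hm, he⟩ := Psi_on hT₀ (f := f) h
    rw [he]; omega
  · intro i j1 j2 hj h2
    have h1 : InShape lam i j1 := shape_mono hs h2 le_rfl hj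
    obtain ⟨hm1, he1⟩ := Psi_on hT₀ (f := f) h1
    obtain ⟨hm2, he2⟩ := Psi_on hT₀ (f := f) h2
    rw [he1, he2]
    have hv : T₀ i j1 ≤ T₀ i j2 := hT₀.1.2.2.1 i j1 j2 hj h2
    have := fword_le hf hm1 hm2 (by omega)
    simp only [Fin.le_def] at this
    omega
  · intro i1 i2 j hi h2
    have h1 : InShape lam i1 j := shape_mono hs h2 (le_of_lt hi) le_rfl
    obtain ⟨hm1, he1⟩ := Psi_on hT₀ (f := f) h1
    obtain ⟨hm2, he2⟩ := Psi_on hT₀ (f := f) h2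
    rw [he1, he2]
    obtain ⟨ha1, ha2⟩ := syt_val_mem hT₀ h1
    obtain ⟨hb1, hb2⟩ := syt_val_mem hT₀ h2
    have hab : T₀ i1 j < T₀ i2 j := hT₀.1.2.2.2 i1 i2 j hi h2
    -- locate a descent between the two values
    have hca : (i1, j) = cellOf lam T₀ (T₀ i1 j) := cellOf_unique hT₀ ha1 ha2 h1 rfl
    have hcb : (i2, j) = cellOf lam T₀ (T₀ i2 j) := cellOf_unique hT₀ hb1 hb2 h2 rfl
    have hrow : (cellOf lam T₀ (T₀ i1 j)).1 < (cellOf lam T₀ (T₀ i2 j)).1 := by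
      rw [← hca, ← hcb]; exact hi
    obtain ⟨d, hd1, hd2, hd3⟩ := exists_descent hT₀ ha1 (le_of_lt hab) hb2 hrow
    obtain ⟨p1, p2, hstrict⟩ := fword_strict hf (by omega) (by omega) hd3
    have hle1 := fword_le hf hm1 p1 (by omega)
    have hle2 := fword_le hf p2 hm2 (by omega)
    have hfin : f ⟨T₀ i1 j - 1, hm1⟩ < f ⟨T₀ i2 j - 1, hm2⟩ :=
      lt_of_le_of_lt hle1 (lt_of_lt_of_le hstrict hle2)
    simp only [Fin.lt_def] at hfin
    omega

lemma Psi_entriesLE {lam : List ℕ} {m n : ℕ} {T₀ : Filling} (hT₀ : IsSYT lam m T₀)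
    {f : Fin m → Fin n} : EntriesLE n (Psi lam m n T₀ f) := by
  intro i j
  by_cases h : InShape lam i j
  · obtain ⟨hm, he⟩ := Psi_on hT₀ (f := f) h
    rw [he]
    have := (f ⟨T₀ i j - 1, hm⟩).isLt
    omega
  · rw [Psi_off h]; omega

/-- injectivity of an SYT on cells -/
lemma syt_inj {lam : List ℕ} {m : ℕ} {T₀ : Filling} (hT₀ : IsSYT lam m T₀)
    {c c' : ℕ × ℕ} (hc : InShape lam c.1 c.2) (hc' : InShape lam c'.1 c'.2)
    (h : T₀ c.1 c.2 = T₀ c'.1 c'.2) : c = c' := by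
  obtain ⟨h1, h2⟩ := syt_val_mem hT₀ hc
  have e1 := cellOf_unique hT₀ h1 h2 hc rfl
  have e2 := cellOf_unique hT₀ h1 h2 hc' h.symm
  rw [e1, e2]

/-- the destandardization respects the standardization (key) order strictly -/
lemma Psi_keyv_lt {lam : List ℕ} {m n : ℕ} (hlam : IsPartitionOf m lam) {T₀ : Filling}
    (hT₀ : IsSYT lam m T₀) {f : Fin m → Fin n}
    (hf : IsFWord m n (desComp lam m T₀) f) {c c' : ℕ × ℕ}
    (hc : InShape lam c.1 c.2) (hc' : InShape lam c'.1 c'.2)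
    (h : T₀ c.1 c.2 < T₀ c'.1 c'.2) :
    keyv m (Psi lam m n T₀ f) c < keyv m (Psi lam m n T₀ f) c' := by
  obtain ⟨ha1, ha2⟩ := syt_val_mem hT₀ hc
  obtain ⟨hb1, hb2⟩ := syt_val_mem hT₀ hc'
  obtain ⟨hm1, he1⟩ := Psi_on hT₀ (f := f) hc
  obtain ⟨hm2, he2⟩ := Psi_on hT₀ (f := f) hc'
  have hle : f ⟨T₀ c.1 c.2 - 1, hm1⟩ ≤ f ⟨T₀ c'.1 c'.2 - 1, hm2⟩ :=
    fword_le hf hm1 hm2 (by omega)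
  rw [keyv_lt_iff hlam hc hc']
  rcases eq_or_lt_of_le hle with heq | hlt
  · right
    constructor
    · rw [he1, he2, heq]
    · -- equal letters: no descent in between, so columns increase
      have hnd : ∀ d, T₀ c.1 c.2 ≤ d → d < T₀ c'.1 c'.2 → ¬ IsDescent lam T₀ d := by
        intro d hd1 hd2 hdes
        obtain ⟨p1, p2, hstrict⟩ := fword_strict hf (by omega) (by omega) hdes
        have hle1 := fword_le hf hm1 p1 (by omega)
        have hle2 := fword_le hf p2 hm2 (by omega)
        have : f ⟨T₀ c.1 c.2 - 1, hm1⟩ < f ⟨T₀ c'.1 c'.2 - 1, hm2⟩ :=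
          lt_of_le_of_lt hle1 (lt_of_lt_of_le hstrict hle2)
        rw [heq] at this
        exact lt_irrefl _ this
      have hcol := col_chain hlam hT₀ ha1 (T₀ c'.1 c'.2) h hb2 hnd
      have e1 := cellOf_unique hT₀ ha1 ha2 hc rfl
      have e2 := cellOf_unique hT₀ hb1 hb2 hc' rfl
      rw [← e1, ← e2] at hcol
      exact hcol
  · left
    rw [he1, he2]
    simp only [Fin.lt_def] at hlt
    omega

/-- standardizing the destandardization recovers the standard tableau -/
lemma std_Psi {lam : List ℕ} {m n : ℕ} (hlam : IsPartitionOf m lam) {T₀ : Filling}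
    (hT₀ : IsSYT lam m T₀) {f : Fin m → Fin n}
    (hf : IsFWord m n (desComp lam m T₀) f) :
    std lam m (Psi lam m n T₀ f) = T₀ := by
  funext i j
  by_cases h : InShape lam i j
  · rw [std, if_pos h]
    have hset : ((cells lam).filter fun c' =>
        keyv m (Psi lam m n T₀ f) c' ≤ keyv m (Psi lam m n T₀ f) (i, j))
        = ((cells lam).filter fun c' => T₀ c'.1 c'.2 ≤ T₀ i j) := by
      apply Finset.filter_congr
      intro c' hc'
      have hc's := mem_cells.mp hc'
      constructor
      · intro hk
        by_contra hcon
        push_neg at hcon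
        have := Psi_keyv_lt hlam hT₀ hf (c := (i, j)) (c' := c') h hc's hcon
        omega
      · intro hv
        rcases eq_or_lt_of_le hv with heq | hlt
        · have := syt_inj hT₀ (c := c') (c' := (i, j)) hc's h heq
          rw [this]
        · exact le_of_lt (Psi_keyv_lt hlam hT₀ hf (c := c') (c' := (i, j)) hc's h hlt)
    rw [rank, hset]
    exact syt_val_eq_card hlam hT₀ (c := (i, j)) (mem_cells.mpr h)
  · rw [std, if_neg h, (hT₀.1.1 i j h).symm]

/-- the word of an SSYT, read off along the standardization -/
noncomputable def fOf (lam : List ℕ) (m n : ℕ) (hn : 0 < n) (T : Filling) (t : Fin m) : Fin n :=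
  ⟨min (T (cellOf lam (std lam m T) (t.val + 1)).1 (cellOf lam (std lam m T) (t.val + 1)).2 - 1)
    (n - 1), by omega⟩

section fOf
variable {lam : List ℕ} {m n : ℕ} {T : Filling}

lemma fOf_val (hlam : IsPartitionOf m lam) (hn : 0 < n) (hT : IsSSYT lam T)
    (hTn : EntriesLE n T) (t : Fin m) :
    (fOf lam m n hn T t).val + 1
      = T (cellOf lam (std lam m T) (t.val + 1)).1 (cellOf lam (std lam m T) (t.val + 1)).2 := by
  have hS := std_isSYT hlam hT
  obtain ⟨hsh, -⟩ := cellOf_spec hS (by omega : 1 ≤ t.val + 1) (by have := t.isLt; omega)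
  have h1 := hT.2.1 _ _ hsh
  have h2 := hTn (cellOf lam (std lam m T) (t.val + 1)).1 (cellOf lam (std lam m T) (t.val + 1)).2
  rw [fOf]
  simp only
  omega

lemma keyv_le_of_rank_le (hlam : IsPartitionOf m lam) (hT : IsSSYT lam T)
    {c c' : ℕ × ℕ} (hc : c ∈ cells lam) (hc' : c' ∈ cells lam)
    (h : rank lam m T c ≤ rank lam m T c') : keyv m T c ≤ keyv m T c' := by
  by_contra hcon
  push_neg at hcon
  have := rank_lt_rank (lam := lam) hc hcon
  omega

lemma val_le_of_keyv_le (hlam : IsPartitionOf m lam) (hT : IsSSYT lam T)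
    {c c' : ℕ × ℕ} (hc : c ∈ cells lam) (hc' : c' ∈ cells lam)
    (h : keyv m T c ≤ keyv m T c') : T c.1 c.2 ≤ T c'.1 c'.2 := by
  rcases eq_or_lt_of_le h with heq | hlt
  · rw [keyv_inj hlam hT (mem_cells.mp hc) (mem_cells.mp hc') heq]
  · rcases (keyv_lt_iff hlam (mem_cells.mp hc) (mem_cells.mp hc')).mp hlt with h1 | ⟨h1, -⟩
    · exact le_of_lt h1
    · exact le_of_eq h1

lemma fOf_isFWord (hlam : IsPartitionOf m lam) (hn : 0 < n) (hT : IsSSYT lam T)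
    (hTn : EntriesLE n T) :
    IsFWord m n (desComp lam m (std lam m T)) (fOf lam m n hn T) := by
  have hS := std_isSYT hlam hT
  -- value of T at the cell of rank k, for 1 ≤ k ≤ m
  have hcell : ∀ k, 1 ≤ k → k ≤ m →
      (cellOf lam (std lam m T) k) ∈ cells lam ∧
      std lam m T (cellOf lam (std lam m T) k).1 (cellOf lam (std lam m T) k).2 = k := by
    intro k h1 h2
    obtain ⟨hsh, hval⟩ := cellOf_spec hS h1 h2
    exact ⟨mem_cells.mpr hsh, hval⟩
  have hrank : ∀ k, 1 ≤ k → k ≤ m →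
      rank lam m T (cellOf lam (std lam m T) k) = k := by
    intro k h1 h2
    obtain ⟨hc, hval⟩ := hcell k h1 h2
    rw [std, if_pos (mem_cells.mp hc)] at hval
    convert hval using 2
  constructor
  · intro t t' htt
    have h1 := hcell (t.val + 1) (by omega) (by have := t.isLt; omega)
    have h2 := hcell (t'.val + 1) (by omega) (by have := t'.isLt; omega)
    have hr1 := hrank (t.val + 1) (by omega) (by have := t.isLt; omega)
    have hr2 := hrank (t'.val + 1) (by omega) (by have := t'.isLt; omega)
    have hr : rank lam m T (cellOf lam (std lam m T) (t.val + 1))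
        ≤ rank lam m T (cellOf lam (std lam m T) (t'.val + 1)) := by
      rw [hr1, hr2]
      have : t.val ≤ t'.val := htt
      omega
    have hkey := keyv_le_of_rank_le hlam hT h1.1 h2.1 hr
    have hval := val_le_of_keyv_le hlam hT h1.1 h2.1 hkey
    simp only [Fin.le_def, fOf]
    omega
  · intro t ht hmem
    rw [mem_innerSums_desComp] at hmem
    obtain ⟨hm1, hm2, hdes⟩ := hmem
    -- the descent gives strictly increasing rows between ranks t+1 and t+2
    obtain ⟨i1, j1, i2, j2, hsh1, hsh2, hv1, hv2, hrow⟩ := hdes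
    have e1 : (i1, j1) = cellOf lam (std lam m T) (t + 1) :=
      cellOf_unique hS (by omega) (by omega) hsh1 hv1
    have e2 : (i2, j2) = cellOf lam (std lam m T) (t + 2) :=
      cellOf_unique hS (by omega) (by omega) hsh2 (by rw [hv2])
    have h1 := hcell (t + 1) (by omega) (by omega)
    have h2 := hcell (t + 2) (by omega) (by omega)
    have hr1 := hrank (t + 1) (by omega) (by omega)
    have hr2 := hrank (t + 2) (by omega) (by omega)
    -- keyv strictly increases from rank t+1 to rank t+2
    have hkey : keyv m T (cellOf lam (std lam m T) (t + 1))
        < keyv m T (cellOf lam (std lam m T) (t + 2)) := by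
      by_contra hcon
      push_neg at hcon
      rcases eq_or_lt_of_le hcon with heq | hlt
      · have := keyv_inj hlam hT (mem_cells.mp h2.1) (mem_cells.mp h1.1) heq
        rw [this] at hr2
        omega
      · have := rank_lt_rank (lam := lam) h1.1 hlt
        omega
    -- strict value increase: equal values contradict eq_val_col
    have hvlt : T (cellOf lam (std lam m T) (t + 1)).1 (cellOf lam (std lam m T) (t + 1)).2
        < T (cellOf lam (std lam m T) (t + 2)).1 (cellOf lam (std lam m T) (t + 2)).2 := by
      rcases (keyv_lt_iff hlam (mem_cells.mp h1.1) (mem_cells.mp h2.1)).mp hkey with h | ⟨hv, hcol⟩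
      · exact h
      · exfalso
        have hrow' : (cellOf lam (std lam m T) (t + 1)).1 < (cellOf lam (std lam m T) (t + 2)).1 := by
          rw [← e1, ← e2]; exact hrow
        have := eq_val_col hlam.1 hT (mem_cells.mp h1.1) (mem_cells.mp h2.1) hrow' hv
        omega
    have hp1 := hT.2.1 _ _ (mem_cells.mp h1.1)
    have hn1 := hTn (cellOf lam (std lam m T) (t + 2)).1 (cellOf lam (std lam m T) (t + 2)).2
    simp only [Fin.lt_def, fOf]
    rw [show t + 1 + 1 = t + 2 from rfl]
    omega

lemma Psi_fOf (hlam : IsPartitionOf m lam) (hn : 0 < n) (hT : IsSSYT lam T)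
    (hTn : EntriesLE n T) :
    Psi lam m n (std lam m T) (fOf lam m n hn T) = T := by
  have hS := std_isSYT hlam hT
  funext i j
  by_cases h : InShape lam i j
  · obtain ⟨hm, he⟩ := Psi_on hS (f := fOf lam m n hn T) h
    rw [he]
    obtain ⟨hs1, hs2⟩ := syt_val_mem hS h
    have hv := fOf_val hlam hn hT hTn ⟨std lam m T i j - 1, hm⟩
    simp only at hv
    rw [hv]
    have : std lam m T i j - 1 + 1 = std lam m T i j := by omega
    rw [this]
    have e := cellOf_unique hS (c := (i, j)) hs1 hs2 h rfl
    rw [← e]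
  · rw [Psi_off h, (hT.1 i j h).symm]
end fOf

lemma fOf_Psi {lam : List ℕ} {m n : ℕ} (hlam : IsPartitionOf m lam) (hn : 0 < n) {T₀ : Filling}
    (hT₀ : IsSYT lam m T₀) {f : Fin m → Fin n}
    (hf : IsFWord m n (desComp lam m T₀) f) :
    fOf lam m n hn (Psi lam m n T₀ f) = f := by
  have hstd := std_Psi hlam hT₀ hf
  funext t
  apply Fin.ext
  have hv1 : (fOf lam m n hn (Psi lam m n T₀ f) t).val + 1
      = Psi lam m n T₀ f (cellOf lam (std lam m (Psi lam m n T₀ f)) (t.val + 1)).1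
          (cellOf lam (std lam m (Psi lam m n T₀ f)) (t.val + 1)).2 :=
    fOf_val hlam hn (Psi_isSSYT hlam hT₀ hf) (Psi_entriesLE hT₀) t
  rw [hstd] at hv1
  obtain ⟨hsh, hval⟩ := cellOf_spec hT₀ (by omega : 1 ≤ t.val + 1) (by have := t.isLt; omega)
  obtain ⟨hm, he⟩ := Psi_on hT₀ (f := f) hsh
  rw [he] at hv1
  have : (⟨T₀ (cellOf lam T₀ (t.val + 1)).1 (cellOf lam T₀ (t.val + 1)).2 - 1, hm⟩ : Fin m) = t :=
    Fin.ext (by simp only [hval]; omega)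
  rw [this] at hv1
  omega

/-- the fiber count: entries equal to `i+1` in the destandardization correspond to
letters of the word equal to `i` -/
lemma countEq_Psi {lam : List ℕ} {m n : ℕ} (hlam : IsPartitionOf m lam) {T₀ : Filling}
    (hT₀ : IsSYT lam m T₀) (f : Fin m → Fin n) (i : Fin n) :
    countEq lam (Psi lam m n T₀ f) (i.val + 1)
      = (Finset.univ.filter fun t : Fin m => f t = i).card := by
  rw [countEq]
  apply Finset.card_bij (fun c hc => (⟨T₀ c.1 c.2 - 1, by
    have h := Finset.mem_filter.mp hc
    have := syt_val_mem hT₀ (mem_cells.mp h.1)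
    omega⟩ : Fin m))
  · intro c hc
    obtain ⟨hcc, hcv⟩ := Finset.mem_filter.mp hc
    have hsh := mem_cells.mp hcc
    obtain ⟨hm, he⟩ := Psi_on hT₀ (f := f) hsh
    rw [he] at hcv
    refine Finset.mem_filter.mpr ⟨Finset.mem_univ _, ?_⟩
    apply Fin.ext
    simpa using hcv
  · intro a ha b hb hab
    obtain ⟨haa, -⟩ := Finset.mem_filter.mp ha
    obtain ⟨hbb, -⟩ := Finset.mem_filter.mp hb
    have h1 := syt_val_mem hT₀ (mem_cells.mp haa)
    have h2 := syt_val_mem hT₀ (mem_cells.mp hbb)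
    have hvv : T₀ a.1 a.2 - 1 = T₀ b.1 b.2 - 1 := congrArg Fin.val hab
    have : T₀ a.1 a.2 = T₀ b.1 b.2 := by omega
    exact syt_inj hT₀ (mem_cells.mp haa) (mem_cells.mp hbb) this
  · intro t ht
    have htv := (Finset.mem_filter.mp ht).2
    obtain ⟨hsh, hval⟩ := cellOf_spec hT₀ (by omega : 1 ≤ t.val + 1) (by have := t.isLt; omega)
    refine ⟨cellOf lam T₀ (t.val + 1), ?_, ?_⟩
    · obtain ⟨hm, he⟩ := Psi_on hT₀ (f := f) hsh
      refine Finset.mem_filter.mpr ⟨mem_cells.mpr hsh, ?_⟩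
      rw [he]
      have : (⟨T₀ (cellOf lam T₀ (t.val + 1)).1 (cellOf lam T₀ (t.val + 1)).2 - 1, hm⟩ : Fin m) = t :=
        Fin.ext (by simp only [hval]; omega)
      rw [this, htv]
    · apply Fin.ext
      simp only [hval]
      omega

lemma wtMonomial_Psi {lam : List ℕ} {m n : ℕ} (hlam : IsPartitionOf m lam) {T₀ : Filling}
    (hT₀ : IsSYT lam m T₀) (f : Fin m → Fin n) :
    wtMonomial lam n (Psi lam m n T₀ f) = ∏ t : Fin m, MvPolynomial.X (f t) := by
  rw [wtMonomial]
  rw [← Finset.prod_fiberwise_of_maps_to (g := f) (t := Finset.univ)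
    (fun x _ => Finset.mem_univ (f x)) (fun t => (MvPolynomial.X (f t) : MvPolynomial (Fin n) ℤ))]
  apply Finset.prod_congr rfl
  intro i _
  rw [countEq_Psi hlam hT₀ f i]
  rw [Finset.prod_congr rfl (fun t htf => by
    rw [(Finset.mem_filter.mp htf).2] : ∀ t ∈ Finset.univ.filter fun t : Fin m => f t = i, _ = MvPolynomial.X i)]
  rw [Finset.prod_const]

/-- fillings with bounded entries supported on the shape form a finite type -/
lemma finite_fillings (lam : List ℕ) (n : ℕ) (P : Filling → Prop)
    (hP : ∀ T, P T → (∀ i j, ¬ InShape lam i j → T i j = 0) ∧ EntriesLE n T) :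
    Finite {T : Filling // P T} := by
  have : Function.Injective (fun T : {T : Filling // P T} =>
      (fun c : cells lam => (⟨T.val c.1.1 c.1.2, by
        have := (hP T.val T.prop).2 c.1.1 c.1.2
        omega⟩ : Fin (n + 1))) ) := by
    intro T T' h
    apply Subtype.ext
    funext i j
    by_cases hsh : InShape lam i j
    · have := congrFun h ⟨(i, j), mem_cells.mpr hsh⟩
      simpa using this
    · rw [(hP T.val T.prop).1 i j hsh, (hP T'.val T'.prop).1 i j hsh]
  exact Finite.of_injective _ this

lemma finite_ssyt (lam : List ℕ) (n : ℕ) :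
    Finite {T : Filling // IsSSYT lam T ∧ EntriesLE n T} :=
  finite_fillings lam n _ (fun T hT => ⟨hT.1.1, hT.2⟩)

lemma finite_syt (lam : List ℕ) (m : ℕ) :
    Finite {T : Filling // IsSYT lam m T} :=
  finite_fillings lam m _ (fun T hT => ⟨hT.1.1, hT.2.1⟩)

/-- The Schur polynomial `s_lam(x₁,…,xₙ)`, i.e. the sum of weight monomials over all
semistandard Young tableaux of shape `lam ⊢ m` with entries at most `n`, equals the sum of
the fundamental quasisymmetric polynomials `F_{DesComp(T₀)}(x₁,…,xₙ)` over all standard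
Young tableaux `T₀` of shape `lam`. -/
theorem schur_eq_sum_fundamental (m n : ℕ) (hn : 1 ≤ n) (lam : List ℕ)
    (hlam : IsPartitionOf m lam) :
    ∑ᶠ T : {T : Filling // IsSSYT lam T ∧ EntriesLE n T}, wtMonomial lam n T.val =
      ∑ᶠ T₀ : {T : Filling // IsSYT lam m T}, Fpoly m n (desComp lam m T₀.val) := by
  have hn' : 0 < n := hn
  haveI := finite_ssyt lam n
  haveI := finite_syt lam m
  letI : Fintype {T : Filling // IsSSYT lam T ∧ EntriesLE n T} := Fintype.ofFinite _
  letI : Fintype {T : Filling // IsSYT lam m T} := Fintype.ofFinite _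
  rw [finsum_eq_sum_of_fintype, finsum_eq_sum_of_fintype]
  have hrhs : ∑ T₀ : {T : Filling // IsSYT lam m T}, Fpoly m n (desComp lam m T₀.val)
      = ∑ p ∈ (Finset.univ : Finset {T : Filling // IsSYT lam m T}).sigma
          (fun T₀ => Finset.univ.filter
            (fun f : Fin m → Fin n => IsFWord m n (desComp lam m T₀.val) f)),
          ∏ t : Fin m, MvPolynomial.X (p.2 t) := by
    rw [Finset.sum_sigma]
    rfl
  rw [hrhs]
  refine Finset.sum_bij'
    (fun (T : {T : Filling // IsSSYT lam T ∧ EntriesLE n T}) _ =>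
      (⟨⟨std lam m T.val, std_isSYT hlam T.prop.1⟩, fOf lam m n hn' T.val⟩ :
        Σ _ : {T : Filling // IsSYT lam m T}, Fin m → Fin n))
    (fun p hp =>
      ⟨Psi lam m n p.1.val p.2, by
        have hf : IsFWord m n (desComp lam m p.1.val) p.2 := by
          have := (Finset.mem_sigma.mp hp).2
          simpa using this
        exact ⟨Psi_isSSYT hlam p.1.prop hf, Psi_entriesLE p.1.prop⟩⟩)
    ?hi ?hj ?li ?ri ?h
  case hi =>
    intro T _
    rw [Finset.mem_sigma]
    refine ⟨Finset.mem_univ _, ?_⟩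
    simp only [Finset.mem_filter, Finset.mem_univ, true_and]
    exact fOf_isFWord hlam hn' T.prop.1 T.prop.2
  case hj =>
    intro p hp
    exact Finset.mem_univ _
  case li =>
    intro T hT
    apply Subtype.ext
    exact Psi_fOf hlam hn' T.prop.1 T.prop.2
  case ri =>
    intro p hp
    have hf : IsFWord m n (desComp lam m p.1.val) p.2 := by
      have := (Finset.mem_sigma.mp hp).2
      simpa using this
    apply Sigma.ext
    · apply Subtype.ext
      exact std_Psi hlam p.1.prop hf
    · apply heq_of_eq
      exact fOf_Psi hlam hn' p.1.prop hf
  case h =>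
    intro T hT
    have hPT : Psi lam m n (std lam m T.val) (fOf lam m n hn' T.val) = T.val :=
      Psi_fOf hlam hn' T.prop.1 T.prop.2
    calc wtMonomial lam n T.val
        = wtMonomial lam n (Psi lam m n (std lam m T.val) (fOf lam m n hn' T.val)) := by rw [hPT]
      _ = ∏ t : Fin m, MvPolynomial.X (fOf lam m n hn' T.val t) :=
          wtMonomial_Psi hlam (std_isSYT hlam T.prop.1) _


end QC
end

section
/- Let λ be a partition of m and n ≥ 1. A standard Young tableau T₀ of shape λ is the standardization of some semistandard Young tableau of shape λ with all entries at most n if and only if the descent composition DesComp(T₀) has at most n parts. -/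
open scoped Classical

namespace QC

lemma shape_up {lam : List ℕ} {i1 i2 j : ℕ} (hs : lam.Pairwise (· ≥ ·))
    (h : InShape lam i2 j) (hle : i1 ≤ i2) : InShape lam i1 j := by
  obtain ⟨h1, h2⟩ := h
  have hi1 : i1 < lam.length := lt_of_le_of_lt hle h1
  refine ⟨hi1, lt_of_lt_of_le h2 ?_⟩
  rcases eq_or_lt_of_le hle with rfl | hlt
  · exact le_refl _
  · have := List.Pairwise.rel_get_of_lt hs (a := ⟨i1, hi1⟩) (b := ⟨i2, h1⟩) hlt
    rw [List.getD_eq_getElem lam 0 h1, List.getD_eq_getElem lam 0 hi1]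
    simpa [List.get_eq_getElem] using this

lemma entry_pos {lam : List ℕ} {m : ℕ} {T₀ : Filling} (hT₀ : IsSYT lam m T₀)
    {i j : ℕ} (h : InShape lam i j) : 1 ≤ T₀ i j := hT₀.1.2.1 i j h

lemma entry_le {lam : List ℕ} {m : ℕ} {T₀ : Filling} (hT₀ : IsSYT lam m T₀)
    {i j : ℕ} : T₀ i j ≤ m := hT₀.2.1 i j

/-- Single-step: if `d` is not a descent, the cell of `d+1` is weakly above and strictly
to the right of the cell of `d`. -/
lemma step_lemma {lam : List ℕ} {m : ℕ} {T₀ : Filling} (hs : lam.Pairwise (· ≥ ·))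
    (hT₀ : IsSYT lam m T₀) {d i1 j1 i2 j2 : ℕ}
    (hc1 : InShape lam i1 j1) (hv1 : T₀ i1 j1 = d)
    (hc2 : InShape lam i2 j2) (hv2 : T₀ i2 j2 = d + 1)
    (hnd : ¬ IsDescent lam T₀ d) : i2 ≤ i1 ∧ j1 < j2 := by
  have hrow : i2 ≤ i1 := by
    by_contra h
    exact hnd ⟨i1, j1, i2, j2, hc1, hc2, hv1, hv2, by omega⟩
  refine ⟨hrow, ?_⟩
  by_contra hcol
  have hj : j2 ≤ j1 := by omega
  rcases eq_or_lt_of_le hrow with rfl | hlt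
  · have := hT₀.1.2.2.1 i2 j2 j1 hj hc1
    omega
  · have hsh : InShape lam i2 j1 := shape_up hs hc1 (le_of_lt hlt)
    have h1 := hT₀.1.2.2.1 i2 j2 j1 hj hsh
    have h2 := hT₀.1.2.2.2 i2 i1 j1 hlt hc1
    omega

/-- Chain: if there are no descents in `[a, b)`, the cell of `b` is weakly above and
strictly to the right of the cell of `a`. -/
lemma chain_lemma {lam : List ℕ} {m : ℕ} {T₀ : Filling} (hs : lam.Pairwise (· ≥ ·))
    (hT₀ : IsSYT lam m T₀) {a i1 j1 : ℕ}
    (hc1 : InShape lam i1 j1) (hv1 : T₀ i1 j1 = a) (ha : 1 ≤ a) :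
    ∀ b, a + 1 ≤ b → b ≤ m → (∀ d, a ≤ d → d < b → ¬ IsDescent lam T₀ d) →
      ∀ i2 j2, InShape lam i2 j2 → T₀ i2 j2 = b → i2 ≤ i1 ∧ j1 < j2 := by
  refine Nat.le_induction ?_ ?_
  · intro _ hnd i2 j2 hc2 hv2
    exact step_lemma hs hT₀ hc1 hv1 hc2 hv2 (hnd a le_rfl (by omega))
  · intro b hb IH hbm hnd i2 j2 hc2 hv2
    obtain ⟨⟨i', j'⟩, ⟨hc', hv'⟩, -⟩ := hT₀.2.2 b (by omega) (by omega)
    have h1 := IH (by omega) (fun d h1 h2 => hnd d h1 (by omega)) i' j' hc' hv'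
    have h2 := step_lemma hs hT₀ hc' hv' hc2 hv2 (hnd b (by omega) (by omega))
    exact ⟨le_trans h2.1 h1.1, lt_trans h1.2 h2.2⟩

lemma descent_exists {lam : List ℕ} {m : ℕ} {T₀ : Filling} (hs : lam.Pairwise (· ≥ ·))
    (hT₀ : IsSYT lam m T₀) {a b i1 j1 i2 j2 : ℕ}
    (hc1 : InShape lam i1 j1) (hv1 : T₀ i1 j1 = a)
    (hc2 : InShape lam i2 j2) (hv2 : T₀ i2 j2 = b)
    (ha : 1 ≤ a) (hab : a < b) (hb : b ≤ m) (hrow : i1 < i2) :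
    ∃ d, a ≤ d ∧ d < b ∧ IsDescent lam T₀ d := by
  by_contra h
  push_neg at h
  have := chain_lemma hs hT₀ hc1 hv1 ha b (by omega) hb
    (fun d h1 h2 => h d h1 h2) i2 j2 hc2 hv2
  omega

/-! ### `destValue` lemmas -/

lemma destValue_eq_card (g : List ℕ) (k : ℕ) :
    destValue g k = ((Finset.range g.length).filter fun i => (g.take i).sum < k).card := by
  simp [destValue, Finset.filter, Finset.range, Finset.card, Multiset.range]

lemma destValue_zero (g : List ℕ) : destValue g 0 = 0 := by
  simp [destValue]

lemma destValue_le (g : List ℕ) (k : ℕ) : destValue g k ≤ g.length := by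
  rw [destValue_eq_card]
  exact le_trans (Finset.card_filter_le _ _) (by simp)

lemma destValue_pos (g : List ℕ) {k : ℕ} (hk : 1 ≤ k) (hg : 0 < g.length) :
    1 ≤ destValue g k := by
  rw [destValue_eq_card]
  refine Finset.card_pos.mpr ⟨0, ?_⟩
  simp [Finset.mem_filter, hg]
  omega

lemma destValue_mono (g : List ℕ) {k k' : ℕ} (h : k ≤ k') :
    destValue g k ≤ destValue g k' := by
  rw [destValue_eq_card, destValue_eq_card]
  exact Finset.card_le_card (Finset.monotone_filter_right _ (fun i _ hi => lt_of_lt_of_le hi h))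

lemma take_sum_mono (g : List ℕ) {i j : ℕ} (h : i ≤ j) : (g.take i).sum ≤ (g.take j).sum := by
  have h2 : List.Sublist (List.take i g) (List.take j g) := by
    have : List.take i (List.take j g) = List.take i g := by
      rw [List.take_take, Nat.min_eq_left h]
    exact this ▸ List.take_sublist _ _
  exact List.Sublist.sum_le_sum h2 (by simp)

lemma destValue_lt (g : List ℕ) {k k' d t : ℕ} (ht : t < g.length)
    (hsum : (g.take t).sum = d) (h1 : k ≤ d) (h2 : d < k') :
    destValue g k < destValue g k' := by
  rw [destValue_eq_card, destValue_eq_card]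
  refine Finset.card_lt_card ⟨Finset.monotone_filter_right _
    (fun i hi => by omega), fun hsub => ?_⟩
  have ht' : t ∈ (Finset.range g.length).filter fun i => (g.take i).sum < k' := by
    simp [Finset.mem_filter, ht]; omega
  have := hsub ht'
  simp [Finset.mem_filter] at this
  omega

/-! ### Descent list and descent composition -/

lemma descentList_sorted (lam : List ℕ) (m : ℕ) (T₀ : Filling) :
    (descentList lam m T₀).Pairwise (· < ·) := (Finset.sortedLT_sort _).pairwise

lemma mem_descentList {lam : List ℕ} {m : ℕ} {T₀ : Filling} {d : ℕ} :
    d ∈ descentList lam m T₀ ↔ (1 ≤ d ∧ d < m) ∧ IsDescent lam T₀ d := by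
  simp [descentList, Finset.mem_sort, Finset.mem_filter, Finset.mem_Ico]

lemma desComp_length {lam : List ℕ} {m : ℕ} {T₀ : Filling} (hm : m ≠ 0) :
    (desComp lam m T₀).length = (descentList lam m T₀).length + 1 := by
  simp [desComp, hm]

lemma numDescents_eq {lam : List ℕ} {m : ℕ} {T₀ : Filling} :
    (descentList lam m T₀).length = numDescents lam m T₀ := by
  simp [descentList, numDescents, Finset.length_sort]

lemma desComp_take_sum {lam : List ℕ} {m : ℕ} {T₀ : Filling} (hm : m ≠ 0) :
    ∀ t (ht : t < (descentList lam m T₀).length),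
      ((desComp lam m T₀).take (t + 1)).sum = (descentList lam m T₀).get ⟨t, ht⟩ := by
  set D := descentList lam m T₀ with hD
  have hg : desComp lam m T₀ = List.zipWith (· - ·) (D ++ [m]) (0 :: D) := by
    simp [desComp, hm, hD]
  have hlen : (desComp lam m T₀).length = D.length + 1 := desComp_length hm
  intro t
  induction t with
  | zero =>
    intro ht
    rw [List.sum_take_succ _ _ (by omega)]
    simp only [hg]
    rw [List.getElem_zipWith]
    simp [List.getElem_append_left ht]
  | succ t IH =>
    intro ht
    have ht' : t < D.length := by omega
    rw [List.sum_take_succ _ _ (by omega), IH ht']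
    simp only [hg]
    rw [List.getElem_zipWith]
    have h1 : (D ++ [m])[t+1]'(by simp; omega) = D[t+1] := List.getElem_append_left ht
    have h2 : (0 :: D)[t+1]'(by simp; omega) = D[t] := List.getElem_cons_succ _ _ _ _
    rw [h1, h2]
    have hmono := (descentList_sorted lam m T₀).sortedLT.strictMono_get
      (a := ⟨t, ht'⟩) (b := ⟨t+1, ht⟩) (by simp)
    simp only [← hD, List.get_eq_getElem] at hmono ⊢
    omega

lemma descent_partial_sum {lam : List ℕ} {m : ℕ} {T₀ : Filling} (hm : m ≠ 0) {d : ℕ}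
    (hd : IsDescent lam T₀ d) (h1 : 1 ≤ d) (h2 : d < m) :
    ∃ t, 0 < t ∧ t < (desComp lam m T₀).length ∧ ((desComp lam m T₀).take t).sum = d := by
  have hmem : d ∈ descentList lam m T₀ := mem_descentList.mpr ⟨⟨h1, h2⟩, hd⟩
  obtain ⟨⟨t, ht⟩, hget⟩ := List.mem_iff_get.mp hmem
  exact ⟨t + 1, by omega, by rw [desComp_length hm]; omega,
    by rw [desComp_take_sum hm t ht]; exact hget⟩

/-! ### Standardization comparison lemmas -/

lemma std_consec {lam : List ℕ} {T : Filling} (hs : lam.Pairwise (· ≥ ·)) (hT : IsSSYT lam T)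
    {i1 j1 i2 j2 k : ℕ} (hc1 : InShape lam i1 j1) (hc2 : InShape lam i2 j2)
    (h1 : stdize lam T i1 j1 = k) (h2 : stdize lam T i2 j2 = k + 1) :
    T i1 j1 ≤ T i2 j2 ∧ (i1 < i2 → T i1 j1 < T i2 j2) := by
  rw [stdize, if_pos hc1] at h1
  rw [stdize, if_pos hc2] at h2
  have key : ∀ (_ : T i2 j2 < T i1 j1 ∨ (T i2 j2 = T i1 j1 ∧ j2 ≤ j1)), False := by
    intro hsub
    have hss : ((cells lam).filter fun c => T c.1 c.2 < T i2 j2 ∨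
          (T c.1 c.2 = T i2 j2 ∧ c.2 ≤ j2)) ⊆
        ((cells lam).filter fun c => T c.1 c.2 < T i1 j1 ∨
          (T c.1 c.2 = T i1 j1 ∧ c.2 ≤ j1)) := by
      intro c hc
      rw [Finset.mem_filter] at hc ⊢
      refine ⟨hc.1, ?_⟩
      rcases hc.2 with h | h
      · rcases hsub with h' | h' <;> [left; left] <;> omega
      · rcases hsub with h' | h'
        · left; omega
        · right; exact ⟨by omega, le_trans h.2 h'.2⟩
    have := Finset.card_le_card hss
    omega
  have hle : T i1 j1 ≤ T i2 j2 := by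
    by_contra h; exact key (Or.inl (by omega))
  refine ⟨hle, fun hrow => ?_⟩
  rcases lt_or_eq_of_le hle with h | heq
  · exact h
  · have hcol : j1 < j2 := by
      by_contra h
      exact key (Or.inr ⟨heq.symm, by omega⟩)
    have hsh : InShape lam i1 j2 := shape_up hs hc2 (le_of_lt hrow)
    have ha := hT.2.2.1 i1 j1 j2 (by omega) hsh
    have hb := hT.2.2.2 i1 i2 j2 hrow hc2
    omega

lemma forward_dir {m n : ℕ} {lam : List ℕ} {T₀ T : Filling}
    (hlam : IsPartitionOf m lam) (hT₀ : IsSYT lam m T₀)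
    (hT : IsSSYT lam T) (hle : EntriesLE n T) (hstd : stdize lam T = T₀) :
    (desComp lam m T₀).length ≤ n := by
  rcases Nat.eq_zero_or_pos m with rfl | hm
  · simp [desComp]
  have hs := hlam.1
  have claim : ∀ k, 1 ≤ k → k ≤ m → ∀ i j, InShape lam i j → T₀ i j = k →
      ((Finset.Ico 1 k).filter (IsDescent lam T₀)).card + 1 ≤ T i j := by
    refine Nat.le_induction ?_ ?_
    · intro _ i j hc _
      have := hT.2.1 i j hc
      simp
      omega
    · intro k hk IH hkm i j hc hv
      obtain ⟨c, ⟨hc', hv'⟩, huniq⟩ := hT₀.2.2 k (by omega) (by omega)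
      have hIH := IH (by omega) c.1 c.2 hc' hv'
      have hstd1 : stdize lam T c.1 c.2 = k := by rw [hstd]; exact hv'
      have hstd2 : stdize lam T i j = k + 1 := by rw [hstd]; exact hv
      have hcons := std_consec hs hT hc' hc hstd1 hstd2
      have hIco : Finset.Ico 1 (k + 1) = insert k (Finset.Ico 1 k) :=
        Nat.Ico_succ_right_eq_insert_Ico (by omega)
      by_cases hd : IsDescent lam T₀ k
      · obtain ⟨a1, b1, a2, b2, hA, hB, hAv, hBv, hab⟩ := hd
        have e1 : (a1, b1) = c := huniq (a1, b1) ⟨hA, hAv⟩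
        obtain ⟨c2, ⟨hc2', hv2'⟩, huniq2⟩ := hT₀.2.2 (k+1) (by omega) hkm
        have e2 : (a2, b2) = c2 := huniq2 (a2, b2) ⟨hB, hBv⟩
        have e3 : (i, j) = c2 := huniq2 (i, j) ⟨hc, hv⟩
        have hrow : c.1 < i := by
          have h1 : a1 = c.1 := congrArg Prod.fst e1
          have h2 : a2 = i := by
            rw [← e3] at e2; exact congrArg Prod.fst e2
          omega
        have hstrict := hcons.2 hrow
        have hcard : ((Finset.Ico 1 (k+1)).filter (IsDescent lam T₀)).card =
            ((Finset.Ico 1 k).filter (IsDescent lam T₀)).card + 1 := by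
          rw [hIco, Finset.filter_insert, if_pos ⟨a1, b1, a2, b2, hA, hB, hAv, hBv, hab⟩,
            Finset.card_insert_of_notMem (by simp [Finset.mem_filter])]
        omega
      · have hcard : ((Finset.Ico 1 (k+1)).filter (IsDescent lam T₀)).card =
            ((Finset.Ico 1 k).filter (IsDescent lam T₀)).card := by
          rw [hIco, Finset.filter_insert, if_neg hd]
        have := hcons.1
        omega
  obtain ⟨c, ⟨hc', hv'⟩, -⟩ := hT₀.2.2 m hm le_rfl
  have hfin := claim m hm le_rfl c.1 c.2 hc' hv'
  have hlen : (desComp lam m T₀).length =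
      ((Finset.Ico 1 m).filter (IsDescent lam T₀)).card + 1 := by
    rw [desComp_length (by omega), numDescents_eq]; rfl
  have := hle c.1 c.2
  omega

/-! ### Backward direction -/

lemma card_values_le {lam : List ℕ} {m : ℕ} {T₀ : Filling} (hT₀ : IsSYT lam m T₀)
    {k : ℕ} (h1 : 1 ≤ k) (hk : k ≤ m) :
    ((cells lam).filter fun c => T₀ c.1 c.2 ≤ k).card = k := by
  have hbij : ((cells lam).filter fun c => T₀ c.1 c.2 ≤ k).card = (Finset.Icc 1 k).card := by
    refine Finset.card_bij (fun c _ => T₀ c.1 c.2) ?_ ?_ ?_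
    · intro c hc
      rw [Finset.mem_filter] at hc
      exact Finset.mem_Icc.mpr ⟨entry_pos hT₀ (mem_cells.mp hc.1), hc.2⟩
    · intro c hc c' hc' hval
      rw [Finset.mem_filter] at hc hc'
      have hin := mem_cells.mp hc.1
      obtain ⟨cc, -, hu⟩ := hT₀.2.2 (T₀ c.1 c.2) (entry_pos hT₀ hin) (le_trans hc.2 hk)
      have e1 := hu c ⟨hin, rfl⟩
      have e2 := hu c' ⟨mem_cells.mp hc'.1, hval.symm⟩
      rw [e1, e2]
    · intro v hv
      rw [Finset.mem_Icc] at hv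
      obtain ⟨c, ⟨hin, hval⟩, -⟩ := hT₀.2.2 v hv.1 (le_trans hv.2 hk)
      exact ⟨c, Finset.mem_filter.mpr ⟨mem_cells.mpr hin, by omega⟩, hval⟩
  rw [hbij, Nat.card_Icc]
  omega

lemma backward_dir {m n : ℕ} {lam : List ℕ} {T₀ : Filling}
    (hlam : IsPartitionOf m lam) (hT₀ : IsSYT lam m T₀)
    (hlen : (desComp lam m T₀).length ≤ n) :
    ∃ T : Filling, IsSSYT lam T ∧ EntriesLE n T ∧ stdize lam T = T₀ := by
  rcases Nat.eq_zero_or_pos m with rfl | hm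
  · -- `m = 0`: the shape is empty
    have hnil : lam = [] := by
      cases lam with
      | nil => rfl
      | cons a l =>
        have h1 := hlam.2.1 a List.mem_cons_self
        have h2 := hlam.2.2
        rw [List.sum_cons] at h2
        omega
    subst hnil
    have hns : ∀ i j, ¬ InShape ([] : List ℕ) i j := by
      intro i j h
      exact absurd h.1 (by simp)
    refine ⟨fun _ _ => 0, ⟨fun _ _ _ => rfl, fun i j h => absurd h (hns i j),
      fun i j1 j2 _ h2 => absurd h2 (hns i j2), fun i1 i2 j _ h2 => absurd h2 (hns i2 j)⟩,
      fun _ _ => Nat.zero_le n, ?_⟩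
    funext i j
    rw [stdize, if_neg (hns i j)]
    exact (hT₀.1.1 i j (hns i j)).symm
  · have hm0 : m ≠ 0 := by omega
    have hs := hlam.1
    set g := desComp lam m T₀ with hg
    have hgpos : 0 < g.length := by rw [hg, desComp_length hm0]; omega
    refine ⟨Dmap g T₀, ⟨?_, ?_, ?_, ?_⟩, ?_, ?_⟩
    · intro i j h
      show destValue g (T₀ i j) = 0
      rw [hT₀.1.1 i j h, destValue_zero]
    · intro i j h
      exact destValue_pos g (entry_pos hT₀ h) hgpos
    · intro i j1 j2 hj hc2
      exact destValue_mono g (hT₀.1.2.2.1 i j1 j2 hj hc2)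
    · intro i1 i2 j hi hc2
      have hc1 : InShape lam i1 j := shape_up hs hc2 (le_of_lt hi)
      have hab : T₀ i1 j < T₀ i2 j := hT₀.1.2.2.2 i1 i2 j hi hc2
      have ha1 : 1 ≤ T₀ i1 j := entry_pos hT₀ hc1
      have hbm : T₀ i2 j ≤ m := entry_le hT₀
      obtain ⟨d, hd1, hd2, hd⟩ := descent_exists hs hT₀ hc1 rfl hc2 rfl ha1 hab hbm hi
      obtain ⟨t, ht0, ht, hsum⟩ := descent_partial_sum hm0 hd (by omega) (by omega)
      exact destValue_lt g ht hsum hd1 hd2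
    · intro i j
      exact le_trans (destValue_le g _) hlen
    · funext i j
      by_cases hij : InShape lam i j
      · rw [stdize, if_pos hij]
        have hk1 : 1 ≤ T₀ i j := entry_pos hT₀ hij
        have hkm : T₀ i j ≤ m := entry_le hT₀
        have hfilter : ((cells lam).filter fun c => Dmap g T₀ c.1 c.2 < Dmap g T₀ i j ∨
              (Dmap g T₀ c.1 c.2 = Dmap g T₀ i j ∧ c.2 ≤ j)) =
            (cells lam).filter fun c => T₀ c.1 c.2 ≤ T₀ i j := by
          apply Finset.filter_congr
          intro c hc
          have hcin := mem_cells.mp hc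
          have ha1 : 1 ≤ T₀ c.1 c.2 := entry_pos hT₀ hcin
          have ham : T₀ c.1 c.2 ≤ m := entry_le hT₀
          simp only [Dmap]
          constructor
          · rintro (hlt | ⟨heq, hcol⟩)
            · by_contra h
              exact absurd (destValue_mono g (by omega : T₀ i j ≤ T₀ c.1 c.2)) (by omega)
            · by_contra h
              have hnd : ∀ d, T₀ i j ≤ d → d < T₀ c.1 c.2 → ¬ IsDescent lam T₀ d := by
                intro d h1 h2 hdes
                obtain ⟨t, ht0, ht, hsum⟩ := descent_partial_sum hm0 hdes (by omega) (by omega)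
                have := destValue_lt g ht hsum h1 h2
                omega
              have := chain_lemma hs hT₀ hij rfl hk1 (T₀ c.1 c.2) (by omega) ham hnd
                c.1 c.2 hcin rfl
              omega
          · intro hak
            rcases eq_or_lt_of_le hak with heq | hlt
            · obtain ⟨cc, -, hu⟩ := hT₀.2.2 (T₀ i j) hk1 hkm
              have e1 := hu (i, j) ⟨hij, rfl⟩
              have e2 := hu c ⟨hcin, heq⟩
              right
              refine ⟨by rw [heq], ?_⟩
              have : c = (i, j) := by rw [e1, e2]
              rw [this]
            · have hmono := destValue_mono g (le_of_lt hlt)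
              rcases eq_or_lt_of_le hmono with heq | hlt'
              · right
                refine ⟨heq, ?_⟩
                have hnd : ∀ d, T₀ c.1 c.2 ≤ d → d < T₀ i j → ¬ IsDescent lam T₀ d := by
                  intro d h1 h2 hdes
                  obtain ⟨t, ht0, ht, hsum⟩ := descent_partial_sum hm0 hdes (by omega) (by omega)
                  have := destValue_lt g ht hsum h1 h2
                  omega
                have := chain_lemma hs hT₀ hcin rfl ha1 (T₀ i j) (by omega) hkm hnd i j hij rfl
                omega
              · left; exact hlt'
        rw [hfilter, card_values_le hT₀ hk1 hkm]
      · rw [stdize, if_neg hij]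
        exact (hT₀.1.1 i j hij).symm

/-- A standard Young tableau `T₀` of shape `lam ⊢ m` is the standardization of some
semistandard Young tableau of shape `lam` with entries at most `n` iff its descent
composition has at most `n` parts. -/
theorem exists_ssyt_standardizing_iff (m n : ℕ) (hn : 1 ≤ n) (lam : List ℕ)
    (hlam : IsPartitionOf m lam) (T₀ : Filling) (hT₀ : IsSYT lam m T₀) :
    (∃ T : Filling, IsSSYT lam T ∧ EntriesLE n T ∧ stdize lam T = T₀) ↔
      (desComp lam m T₀).length ≤ n := by
  constructor
  · rintro ⟨T, h1, h2, h3⟩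
    exact forward_dir hlam hT₀ h1 h2 h3
  · intro hlen
    exact backward_dir hlam hT₀ hlen

end QC
end
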